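/- For the discrete exponential-polynomial pmf p_θ on ℕ with θ_d < 0 and d ≥ 2, lim_{k→∞} p_θ(k+1)/(1 - P_θ(k)) = 1, where P_θ is the CDF. -/
import Mathlib

private lemma aux_pow_le (x : ℝ) (hx : 0 ≤ x) :
    ∀ i : ℕ, (x + 1) ^ (i + 1) - x ^ (i + 1) ≤ ((i : ℝ) + 1) * (x + 1) ^ i := by
  intro i
  induction i with
  | zero => simp
  | succ n ih =>
      have h2 : x ^ (n + 1) ≤ (x + 1) ^ (n + 1) := pow_le_pow_left₀ hx (by linarith) _
      have key : (x + 1) ^ (n + 2) - x ^ (n + 2)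
          = (x + 1) * ((x + 1) ^ (n + 1) - x ^ (n + 1)) + x ^ (n + 1) := by ring
      have hmul := mul_le_mul_of_nonneg_left ih (by linarith : (0 : ℝ) ≤ x + 1)
      have hps : (x + 1) * (((n : ℝ) + 1) * (x + 1) ^ n) = ((n : ℝ) + 1) * (x + 1) ^ (n + 1) := by
        rw [pow_succ]; ring
      push_cast
      rw [key]
      nlinarith [hmul, h2]

private lemma aux_pow_ge (x : ℝ) (hx : 0 ≤ x) :
    ∀ i : ℕ, ((i : ℝ) + 1) * x ^ i ≤ (x + 1) ^ (i + 1) - x ^ (i + 1) := by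
  intro i
  induction i with
  | zero => simp
  | succ n ih =>
      have h1 : (0 : ℝ) ≤ x ^ n := by positivity
      have h2 : (0 : ℝ) ≤ x ^ (n + 1) := by positivity
      have key : (x + 1) ^ (n + 2) - x ^ (n + 2)
          = (x + 1) * ((x + 1) ^ (n + 1) - x ^ (n + 1)) + x ^ (n + 1) := by ring
      have hmul := mul_le_mul_of_nonneg_left ih (by linarith : (0 : ℝ) ≤ x + 1)
      push_cast
      rw [key]
      nlinarith [hmul, h2, pow_succ x n]

private lemma aux_sum_Icc (p : ℕ → ℝ) (k : ℕ) :
    ∑ ℓ ∈ Finset.Icc 1 k, p ℓ = ∑ i ∈ Finset.range k, p (i + 1) := by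
  induction k with
  | zero => simp
  | succ n ih => rw [Finset.sum_Icc_succ_top (by omega), ih, Finset.sum_range_succ]

/-- For the discrete exponential-polynomial pmf on ℕ (θ_d < 0, d ≥ 2),
`p(k+1)/(1 - P(k)) → 1` as k → ∞ (Stolz–Cesàro). -/
theorem stmt_13 (d : ℕ) (hd : 2 ≤ d) (θ : ℕ → ℝ) (hθ : θ (d - 1) < 0)
    (C : ℝ) (p : ℕ → ℝ) (P : ℕ → ℝ)
    (hC : C = ∑' k : ℕ, Real.exp (∑ i ∈ Finset.range d, θ i * ((k : ℝ) + 1) ^ (i + 1)))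
    (hp : ∀ k : ℕ, 1 ≤ k →
      p k = C⁻¹ * Real.exp (∑ i ∈ Finset.range d, θ i * (k : ℝ) ^ (i + 1)))
    (hP : ∀ k : ℕ, P k = ∑ ℓ ∈ Finset.Icc 1 k, p ℓ) :
    Filter.Tendsto (fun k : ℕ => p (k + 1) / (1 - P k)) Filter.atTop (nhds 1) := by
  obtain ⟨e, rfl⟩ : ∃ e, d = e + 1 := ⟨d - 1, by omega⟩
  have he : 1 ≤ e := by omega
  simp only [Nat.add_sub_cancel] at hθ
  set q : ℕ → ℝ := fun k => Real.exp (∑ i ∈ Finset.range (e + 1), θ i * (k : ℝ) ^ (i + 1))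
    with hq
  have hqpos : ∀ k, 0 < q k := fun k => Real.exp_pos _
  set f : ℕ → ℝ := fun n => q (n + 1) with hf
  have hfpos : ∀ n, 0 < f n := fun n => hqpos _
  set E : ℕ → ℝ := fun k =>
    ∑ i ∈ Finset.range (e + 1), θ i * (((k : ℝ) + 1) ^ (i + 1) - (k : ℝ) ^ (i + 1)) with hE
  have hqratio : ∀ k : ℕ, q (k + 1) / q k = Real.exp (E k) := by
    intro k
    rw [hq, hE]
    simp only
    rw [← Real.exp_sub]
    congr 1
    rw [← Finset.sum_sub_distrib]
    push_cast
    congr 1; ext i; ring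
  -- E tends to -∞
  have hEbot : Filter.Tendsto E Filter.atTop Filter.atBot := by
    set S : ℝ := ∑ i ∈ Finset.range e, |θ i| * ((i : ℝ) + 1) with hS
    have hS0 : 0 ≤ S := Finset.sum_nonneg fun i _ => by positivity
    set M : ℝ := S * 2 ^ e with hM
    have hM0 : 0 ≤ M := by positivity
    have hbound : ∀ k : ℕ, 1 ≤ k → θ e * (k : ℝ) + M ≤ -1 →
        E k ≤ θ e * (k : ℝ) + M := by
      intro k hk1 hkM
      have hk1' : (1 : ℝ) ≤ (k : ℝ) := by exact_mod_cast hk1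
      have hk0 : (0 : ℝ) ≤ (k : ℝ) := by linarith
      have hsplit : E k = (∑ i ∈ Finset.range e,
            θ i * (((k : ℝ) + 1) ^ (i + 1) - (k : ℝ) ^ (i + 1)))
          + θ e * (((k : ℝ) + 1) ^ (e + 1) - (k : ℝ) ^ (e + 1)) := by
        rw [hE]; exact Finset.sum_range_succ _ _
      have hlow : (∑ i ∈ Finset.range e,
            θ i * (((k : ℝ) + 1) ^ (i + 1) - (k : ℝ) ^ (i + 1)))
          ≤ S * ((k : ℝ) + 1) ^ (e - 1) := by
        rw [hS, Finset.sum_mul]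
        apply Finset.sum_le_sum
        intro i hi
        have hie : i ≤ e - 1 := by
          have := Finset.mem_range.mp hi; omega
        have hd0 : 0 ≤ ((k : ℝ) + 1) ^ (i + 1) - (k : ℝ) ^ (i + 1) := by
          have : (k : ℝ) ^ (i + 1) ≤ ((k : ℝ) + 1) ^ (i + 1) :=
            pow_le_pow_left₀ hk0 (by linarith) _
          linarith
        have h1 : θ i * (((k : ℝ) + 1) ^ (i + 1) - (k : ℝ) ^ (i + 1))
            ≤ |θ i| * (((k : ℝ) + 1) ^ (i + 1) - (k : ℝ) ^ (i + 1)) :=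
          mul_le_mul_of_nonneg_right (le_abs_self _) hd0
        have h2 : ((k : ℝ) + 1) ^ (i + 1) - (k : ℝ) ^ (i + 1)
            ≤ ((i : ℝ) + 1) * ((k : ℝ) + 1) ^ i := aux_pow_le _ hk0 i
        have h3 : ((k : ℝ) + 1) ^ i ≤ ((k : ℝ) + 1) ^ (e - 1) :=
          pow_le_pow_right₀ (by linarith) hie
        calc θ i * (((k : ℝ) + 1) ^ (i + 1) - (k : ℝ) ^ (i + 1))
            ≤ |θ i| * (((i : ℝ) + 1) * ((k : ℝ) + 1) ^ i) :=
              h1.trans (mul_le_mul_of_nonneg_left h2 (abs_nonneg _))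
          _ ≤ |θ i| * (((i : ℝ) + 1) * ((k : ℝ) + 1) ^ (e - 1)) := by
              apply mul_le_mul_of_nonneg_left _ (abs_nonneg _)
              exact mul_le_mul_of_nonneg_left h3 (by positivity)
          _ = |θ i| * ((i : ℝ) + 1) * ((k : ℝ) + 1) ^ (e - 1) := by ring
      have htop : θ e * (((k : ℝ) + 1) ^ (e + 1) - (k : ℝ) ^ (e + 1))
          ≤ θ e * (k : ℝ) ^ e := by
        have hge : ((e : ℝ) + 1) * (k : ℝ) ^ e
            ≤ ((k : ℝ) + 1) ^ (e + 1) - (k : ℝ) ^ (e + 1) := aux_pow_ge _ hk0 e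
        have hke : (0 : ℝ) < (k : ℝ) ^ e := by positivity
        have hA := mul_le_mul_of_nonpos_left hge hθ.le
        have he0 : (0 : ℝ) ≤ (e : ℝ) := Nat.cast_nonneg e
        nlinarith [mul_nonneg he0 hke.le, hθ.le, mul_nonpos_of_nonpos_of_nonneg hθ.le (mul_nonneg he0 hke.le)]
      have hpow : ((k : ℝ) + 1) ^ (e - 1) ≤ 2 ^ e * (k : ℝ) ^ (e - 1) := by
        have h1 : ((k : ℝ) + 1) ^ (e - 1) ≤ (2 * (k : ℝ)) ^ (e - 1) :=
          pow_le_pow_left₀ (by linarith) (by linarith) _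
        have h2 : (2 * (k : ℝ)) ^ (e - 1) = 2 ^ (e - 1) * (k : ℝ) ^ (e - 1) := mul_pow _ _ _
        have h3 : (2 : ℝ) ^ (e - 1) ≤ 2 ^ e := pow_le_pow_right₀ (by norm_num) (by omega)
        have hknn : (0 : ℝ) ≤ (k : ℝ) ^ (e - 1) := by positivity
        calc ((k : ℝ) + 1) ^ (e - 1) ≤ 2 ^ (e - 1) * (k : ℝ) ^ (e - 1) := by
              rw [← h2]; exact h1
          _ ≤ 2 ^ e * (k : ℝ) ^ (e - 1) := mul_le_mul_of_nonneg_right h3 hknn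
      have hEle : E k ≤ (k : ℝ) ^ (e - 1) * (θ e * (k : ℝ) + M) := by
        rw [hsplit]
        have hSpow : S * ((k : ℝ) + 1) ^ (e - 1) ≤ M * (k : ℝ) ^ (e - 1) := by
          calc S * ((k : ℝ) + 1) ^ (e - 1) ≤ S * (2 ^ e * (k : ℝ) ^ (e - 1)) := by
                nlinarith [hpow, hS0]
            _ = M * (k : ℝ) ^ (e - 1) := by rw [hM]; ring
        have hkee : (k : ℝ) ^ e = (k : ℝ) * (k : ℝ) ^ (e - 1) := by
          rw [← pow_succ']
          congr 1
          omega
        have htop' : θ e * (k : ℝ) ^ e = (k : ℝ) ^ (e - 1) * (θ e * (k : ℝ)) := by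
          rw [hkee]; ring
        calc (∑ i ∈ Finset.range e,
              θ i * (((k : ℝ) + 1) ^ (i + 1) - (k : ℝ) ^ (i + 1)))
            + θ e * (((k : ℝ) + 1) ^ (e + 1) - (k : ℝ) ^ (e + 1))
            ≤ S * ((k : ℝ) + 1) ^ (e - 1) + θ e * (k : ℝ) ^ e := add_le_add hlow htop
          _ ≤ M * (k : ℝ) ^ (e - 1) + θ e * (k : ℝ) ^ e := by linarith
          _ = (k : ℝ) ^ (e - 1) * (θ e * (k : ℝ) + M) := by rw [htop']; ring
      have hkpow1 : (1 : ℝ) ≤ (k : ℝ) ^ (e - 1) := one_le_pow₀ hk1'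
      nlinarith [hEle, hkpow1, hkM]
    have hlin : Filter.Tendsto (fun k : ℕ => θ e * (k : ℝ) + M) Filter.atTop Filter.atBot := by
      apply Filter.tendsto_atBot_add_const_right
      exact (Filter.tendsto_const_mul_atBot_of_neg hθ).mpr tendsto_natCast_atTop_atTop
    apply Filter.tendsto_atBot_mono' Filter.atTop _ hlin
    have h1 : ∀ᶠ k : ℕ in Filter.atTop, 1 ≤ k := Filter.eventually_ge_atTop 1
    have h2 : ∀ᶠ k : ℕ in Filter.atTop, θ e * (k : ℝ) + M ≤ -1 :=
      hlin.eventually (Filter.eventually_le_atBot (-1))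
    filter_upwards [h1, h2] with k hk1 hk2
    exact hbound k hk1 hk2
  -- ratio of q tends to 0
  have hr0 : Filter.Tendsto (fun k : ℕ => q (k + 1) / q k) Filter.atTop (nhds 0) := by
    have : Filter.Tendsto (fun k : ℕ => Real.exp (E k)) Filter.atTop (nhds 0) :=
      Real.tendsto_exp_atBot.comp hEbot
    exact this.congr fun k => (hqratio k).symm
  -- summability of f
  have hSum : Summable f := by
    apply summable_of_ratio_test_tendsto_lt_one (l := 0) one_pos
    · exact Filter.Eventually.of_forall fun n => (hfpos n).ne'
    · have : Filter.Tendsto (fun n : ℕ => q (n + 1 + 1) / q (n + 1)) Filter.atTop (nhds 0) :=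
        hr0.comp (Filter.tendsto_add_atTop_nat 1)
      apply this.congr
      intro n
      rw [hf]
      simp only [Real.norm_eq_abs, abs_of_pos (hqpos _)]
  have hC' : C = ∑' k, f k := by
    rw [hC]
    apply tsum_congr
    intro k
    show _ = Real.exp (∑ i ∈ Finset.range (e + 1), θ i * ((k + 1 : ℕ) : ℝ) ^ (i + 1))
    congr 1
    apply Finset.sum_congr rfl
    intro i _
    push_cast
    ring
  have hCpos : 0 < C := by
    rw [hC']
    exact Summable.tsum_pos hSum (fun i => (hfpos i).le) 0 (hfpos 0)
  have hCne : C ≠ 0 := hCpos.ne'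
  set T : ℕ → ℝ := fun k => ∑' i, f (i + k) with hT
  have hTsum : ∀ k, Summable fun i => f (i + k) := fun k =>
    (summable_nat_add_iff k).mpr hSum
  have hTpos : ∀ k, 0 < T k := fun k =>
    Summable.tsum_pos (hTsum k) (fun i => (hfpos _).le) 0 (hfpos _)
  have h1P : ∀ k, 1 - P k = C⁻¹ * T k := by
    intro k
    have hPk : P k = C⁻¹ * ∑ i ∈ Finset.range k, f i := by
      rw [hP, aux_sum_Icc, Finset.mul_sum]
      apply Finset.sum_congr rfl
      intro i _
      exact hp (i + 1) (by omega)
    have hsum : ∑ i ∈ Finset.range k, f i + T k = C := by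
      rw [hT, hC']
      exact Summable.sum_add_tsum_nat_add k hSum
    rw [hPk]
    field_simp
    linarith [hsum]
  have hratio_eq : ∀ k : ℕ, p (k + 1) / (1 - P k) = f k / T k := by
    intro k
    have hpk : p (k + 1) = C⁻¹ * f k := by
      exact hp (k + 1) (by omega)
    rw [hpk, h1P k]
    rw [mul_div_mul_left _ _ (inv_ne_zero hCne)]
  -- the tail quotient u
  set u : ℕ → ℝ := fun k => T (k + 1) / f k with hu
  have hTk : ∀ k, T k = f k + T (k + 1) := by
    intro k
    rw [hT]
    simp only
    rw [Summable.tsum_eq_zero_add (hTsum k)]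
    congr 1
    · simp
    · apply tsum_congr
      intro i
      congr 1
      omega
  have hupos : ∀ k, 0 < u k := fun k => div_pos (hTpos _) (hfpos k)
  -- u → 0
  have hu0 : Filter.Tendsto u Filter.atTop (nhds 0) := by
    rw [Metric.tendsto_atTop]
    intro ε hε
    set δ : ℝ := min (ε / 4) (1 / 2) with hδ
    have hδ0 : 0 < δ := lt_min (by linarith) (by norm_num)
    have hδ1 : δ < 1 := lt_of_le_of_lt (min_le_right _ _) (by norm_num)
    have hδhalf : δ ≤ 1 / 2 := min_le_right _ _
    have hδε : δ ≤ ε / 4 := min_le_left _ _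
    obtain ⟨N, hN⟩ := Filter.eventually_atTop.mp (hr0.eventually_lt_const hδ0)
    refine ⟨N, fun k hk => ?_⟩
    have hgeom : ∀ m : ℕ, f (m + (k + 1)) ≤ f k * δ ^ (m + 1) := by
      intro m
      induction m with
      | zero =>
          have h := hN (k + 1) (by omega)
          have h' : q (k + 1 + 1) ≤ δ * q (k + 1) := by
            rw [div_lt_iff₀ (hqpos (k + 1))] at h
            linarith
          show f (0 + (k + 1)) ≤ f k * δ ^ 1
          rw [pow_one]
          calc f (0 + (k + 1)) = q (k + 1 + 1) := by apply congrArg q; omega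
            _ ≤ δ * q (k + 1) := h'
            _ = f k * δ := mul_comm _ _
      | succ n ih =>
          have hstep := hN (n + k + 2) (by omega)
          rw [div_lt_iff₀ (hqpos (n + k + 2))] at hstep
          have h1 : f (n + 1 + (k + 1)) ≤ δ * f (n + (k + 1)) := by
            have e2 : f (n + 1 + (k + 1)) = q (n + k + 2 + 1) := by apply congrArg q; omega
            have e3 : f (n + (k + 1)) = q (n + k + 2) := by apply congrArg q; omega
            rw [e2, e3]
            linarith
          calc f (n + 1 + (k + 1)) ≤ δ * f (n + (k + 1)) := h1
            _ ≤ δ * (f k * δ ^ (n + 1)) := mul_le_mul_of_nonneg_left ih hδ0.le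
            _ = f k * δ ^ (n + 2) := by ring
    have htail : T (k + 1) ≤ f k * (δ * (1 - δ)⁻¹) := by
      have hsgeom : Summable fun m : ℕ => f k * δ ^ (m + 1) := by
        have h := (summable_geometric_of_lt_one hδ0.le hδ1).mul_left (f k * δ)
        exact h.congr fun m => by rw [pow_succ']; ring
      have hle := Summable.tsum_le_tsum hgeom (hTsum (k + 1)) hsgeom
      have hval : ∑' m : ℕ, f k * δ ^ (m + 1) = f k * (δ * (1 - δ)⁻¹) := by
        have : ∀ m : ℕ, f k * δ ^ (m + 1) = (f k * δ) * δ ^ m := by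
          intro m; rw [pow_succ']; ring
        rw [tsum_congr this, tsum_mul_left, tsum_geometric_of_lt_one hδ0.le hδ1]
        ring
      calc T (k + 1) = ∑' i, f (i + (k + 1)) := rfl
        _ ≤ ∑' m : ℕ, f k * δ ^ (m + 1) := hle
        _ = f k * (δ * (1 - δ)⁻¹) := hval
    have hub : u k ≤ δ * (1 - δ)⁻¹ := by
      rw [hu]
      rw [div_le_iff₀ (hfpos k)]
      calc T (k + 1) ≤ f k * (δ * (1 - δ)⁻¹) := htail
        _ = δ * (1 - δ)⁻¹ * f k := by ring
    have h2δ : δ * (1 - δ)⁻¹ ≤ 2 * δ := by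
      rw [mul_inv_le_iff₀ (by linarith)]
      nlinarith
    rw [Real.dist_eq, sub_zero, abs_of_pos (hupos k)]
    calc u k ≤ δ * (1 - δ)⁻¹ := hub
      _ ≤ 2 * δ := h2δ
      _ ≤ ε / 2 := by linarith
      _ < ε := by linarith
  -- conclude
  have hfinal : Filter.Tendsto (fun k : ℕ => (1 + u k)⁻¹) Filter.atTop (nhds 1) := by
    have h := (Filter.Tendsto.add tendsto_const_nhds hu0 :
      Filter.Tendsto (fun k : ℕ => (1 : ℝ) + u k) Filter.atTop (nhds (1 + 0)))
    have := h.inv₀ (by norm_num)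
    simpa using this
  apply hfinal.congr
  intro k
  have hfk := hfpos k
  have hT1 := hTpos (k + 1)
  have heq : f k / T k = (1 + u k)⁻¹ := by
    have hu' : u k = T (k + 1) / f k := rfl
    rw [hTk k, hu']
    have hstep : 1 + T (k + 1) / f k = (f k + T (k + 1)) / f k := by
      field_simp
    rw [hstep, inv_div]
  rw [hratio_eq k, heq]
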